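/- arXiv:1005.4648 — 2 statements merged into one kernel-verified Lean document; each statement's English description precedes it below -/
import Mathlib

section
/- Suppose f, g: ℂ → ℂ are real-differentiable, f satisfies the Beltrami equation f_z̄ = μ_f f_z with f_z ≠ 0, and g satisfies g_z̄ = μ_g g_z. Then the composition g ∘ f satisfies (g∘f)_z̄ = μ (g∘f)_z where μ = (μ_f + (μ_g∘f)·τ)/(1 + conj(μ_f)·(μ_g∘f)·τ) and τ = conj(f_z)/f_z, provided the denominator is nonzero. -/
noncomputable def Wz (f : ℂ → ℂ) (z : ℂ) : ℂ :=
  (fderiv ℝ f z 1 - Complex.I * fderiv ℝ f z Complex.I) / 2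

noncomputable def Wzbar (f : ℂ → ℂ) (z : ℂ) : ℂ :=
  (fderiv ℝ f z 1 + Complex.I * fderiv ℝ f z Complex.I) / 2

lemma wirtinger_apply (f : ℂ → ℂ) (z v : ℂ) :
    fderiv ℝ f z v = Wz f z * v + Wzbar f z * (starRingEnd ℂ v) := by
  have hv : v = v.re • (1 : ℂ) + v.im • Complex.I := by
    simp [Complex.real_smul]
  rw [hv, map_add, map_smul, map_smul]
  simp only [Wz, Wzbar, smul_eq_mul, Complex.real_smul, map_add, map_mul, map_one,
    Complex.conj_I, Complex.conj_ofReal, mul_one]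
  ring_nf
  linear_combination (↑v.im * fderiv ℝ f z Complex.I) * Complex.I_mul_I

lemma wirtinger_comp (f g : ℂ → ℂ) (z : ℂ)
    (hf : DifferentiableAt ℝ f z) (hg : DifferentiableAt ℝ g (f z)) :
    Wz (g ∘ f) z = Wz g (f z) * Wz f z + Wzbar g (f z) * starRingEnd ℂ (Wzbar f z) ∧
    Wzbar (g ∘ f) z = Wz g (f z) * Wzbar f z + Wzbar g (f z) * starRingEnd ℂ (Wz f z) := by
  have hcomp : fderiv ℝ (g ∘ f) z = (fderiv ℝ g (f z)).comp (fderiv ℝ f z) :=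
    fderiv_comp z hg hf
  constructor <;>
  · simp only [Wz, Wzbar]
    rw [hcomp]
    simp only [ContinuousLinearMap.comp_apply, wirtinger_apply g (f z)]
    simp only [map_div₀, map_add, map_sub, map_mul, map_one, Complex.conj_I, map_ofNat]
    ring_nf
    simp only [show (Complex.I : ℂ) ^ 2 = -1 from Complex.I_sq,
      show (Complex.I : ℂ) ^ 3 = -Complex.I from by
        rw [pow_succ, Complex.I_sq]; ring]
    ring

/-- Composition formula for Beltrami coefficients:
if `f_z̄ = μ_f f_z` with `f_z ≠ 0` and `g_z̄ = μ_g g_z`, then `g ∘ f` satisfies the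
Beltrami equation with coefficient `(μ_f + (μ_g∘f) τ)/(1 + conj(μ_f) (μ_g∘f) τ)`,
`τ = conj(f_z)/f_z`, provided the denominator is nonzero. -/
theorem beltrami_composition
    (f g : ℂ → ℂ) (μf μg : ℂ → ℂ)
    (hf : Differentiable ℝ f) (hg : Differentiable ℝ g)
    (hbf : ∀ z, Wzbar f z = μf z * Wz f z)
    (hfz : ∀ z, Wz f z ≠ 0)
    (hbg : ∀ w, Wzbar g w = μg w * Wz g w)
    (z : ℂ)
    (hden : 1 + (starRingEnd ℂ (μf z)) * μg (f z) * (starRingEnd ℂ (Wz f z) / Wz f z) ≠ 0) :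
    Wzbar (g ∘ f) z =
      ((μf z + μg (f z) * (starRingEnd ℂ (Wz f z) / Wz f z)) /
        (1 + (starRingEnd ℂ (μf z)) * μg (f z) * (starRingEnd ℂ (Wz f z) / Wz f z))) *
        Wz (g ∘ f) z := by
  obtain ⟨h1, h2⟩ := wirtinger_comp f g z (hf z) (hg (f z))
  rw [h1, h2, hbf z, hbg (f z), map_mul]
  have hP := hfz z
  rw [div_mul_eq_mul_div, eq_div_iff hden]
  field_simp [hP]
end

section
/- In the Euclidean discrete conformal deformation of a triangle, the 3×3 matrix H with entries H_{ab} = -∂θ_a/∂u_b is symmetric, has all row sums equal to zero, and is positive semidefinite; moreover it is positive definite on the subspace {(w_1,w_2,w_3) : w_1 + w_2 + w_3 = 0}. -/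
open Real Matrix

private lemma yamabe_key (c1 c2 s1 s2 x y : ℝ)
    (hs1 : 0 < s1) (hs2 : 0 < s2) (hs0 : 0 < s1*c2 + c1*s2) :
    c2/s2 * x^2 + (s1*s2 - c1*c2)/(s1*c2 + c1*s2) * y^2 + c1/s1 * (x+y)^2 =
      (((s1*c2 + c1*s2)*x + c1*s2*y)^2 + (s1*s2*y)^2) / (s1*s2*(s1*c2 + c1*s2)) := by
  rw [eq_div_iff (by positivity)]
  have e1 : c2/s2 * s2 = c2 := div_mul_cancel₀ _ hs2.ne'
  have e2 : c1/s1 * s1 = c1 := div_mul_cancel₀ _ hs1.ne'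
  have e3 : (s1*s2 - c1*c2)/(s1*c2 + c1*s2) * (s1*c2 + c1*s2) = s1*s2 - c1*c2 := div_mul_cancel₀ _ hs0.ne'
  linear_combination (x^2*s1*(s1*c2 + c1*s2)) * e1 + (y^2*s1*s2) * e3 + ((x+y)^2*s2*(s1*c2 + c1*s2)) * e2

/-- The Hessian of the discrete Yamabe energy of a single Euclidean triangle with
angles `θ 0, θ 1, θ 2` (summing to π): `H_{ab} = -cot θ_c` for `a ≠ b`,
`H_{aa} = cot θ_b + cot θ_c`. It is symmetric, has zero row sums, is positive
semidefinite, and positive definite on `{w : w 0 + w 1 + w 2 = 0}`. -/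
theorem yamabe_hessian_posdef
    (θ : Fin 3 → ℝ) (hθ : ∀ a, 0 < θ a ∧ θ a < π) (hsum : θ 0 + θ 1 + θ 2 = π)
    (H : Matrix (Fin 3) (Fin 3) ℝ)
    (hH : ∀ a b, H a b =
      if a = b then (∑ c ∈ Finset.univ.erase a, Real.cos (θ c) / Real.sin (θ c))
      else -(Real.cos (θ (3 - a - b)) / Real.sin (θ (3 - a - b)))) :
    H.IsSymm ∧ (∀ a, ∑ b, H a b = 0) ∧ H.PosSemidef ∧
      ∀ w : Fin 3 → ℝ, (∑ a, w a = 0) → w ≠ 0 → 0 < w ⬝ᵥ H.mulVec w := by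
  set ct : Fin 3 → ℝ := fun a => Real.cos (θ a) / Real.sin (θ a) with hct
  have hs : ∀ a, 0 < Real.sin (θ a) := fun a => Real.sin_pos_of_pos_of_lt_pi (hθ a).1 (hθ a).2
  have hθ0 : θ 0 = π - (θ 1 + θ 2) := by linarith
  have hsin0 : Real.sin (θ 0) = Real.sin (θ 1) * Real.cos (θ 2) + Real.cos (θ 1) * Real.sin (θ 2) := by
    rw [hθ0, Real.sin_pi_sub, Real.sin_add]
  have hcos0 : Real.cos (θ 0) = Real.sin (θ 1) * Real.sin (θ 2) - Real.cos (θ 1) * Real.cos (θ 2) := by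
    rw [hθ0, Real.cos_pi_sub, Real.cos_add]; ring
  have herase : ∀ a : Fin 3, (∑ c ∈ Finset.univ.erase a, Real.cos (θ c) / Real.sin (θ c)) =
      (ct 0 + ct 1 + ct 2) - ct a := by
    intro a
    rw [Finset.sum_erase_eq_sub (Finset.mem_univ a), Fin.sum_univ_three]
  have h00 : H 0 0 = ct 1 + ct 2 := by rw [hH, if_pos rfl, herase]; ring
  have h11 : H 1 1 = ct 0 + ct 2 := by rw [hH, if_pos rfl, herase]; ring
  have h22 : H 2 2 = ct 0 + ct 1 := by rw [hH, if_pos rfl, herase]; ring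
  have i01 : ((3:Fin 3) - 0 - 1) = 2 := rfl
  have i10 : ((3:Fin 3) - 1 - 0) = 2 := rfl
  have i02 : ((3:Fin 3) - 0 - 2) = 1 := rfl
  have i20 : ((3:Fin 3) - 2 - 0) = 1 := rfl
  have i12 : ((3:Fin 3) - 1 - 2) = 0 := rfl
  have i21 : ((3:Fin 3) - 2 - 1) = 0 := rfl
  have h01 : H 0 1 = -(ct 2) := by rw [hH, if_neg (by decide), i01]
  have h10 : H 1 0 = -(ct 2) := by rw [hH, if_neg (by decide), i10]
  have h02 : H 0 2 = -(ct 1) := by rw [hH, if_neg (by decide), i02]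
  have h20 : H 2 0 = -(ct 1) := by rw [hH, if_neg (by decide), i20]
  have h12 : H 1 2 = -(ct 0) := by rw [hH, if_neg (by decide), i12]
  have h21 : H 2 1 = -(ct 0) := by rw [hH, if_neg (by decide), i21]
  -- quadratic form
  have hq : ∀ w : Fin 3 → ℝ, w ⬝ᵥ H.mulVec w =
      ct 2 * (w 0 - w 1)^2 + (ct 0) * (w 1 - w 2)^2 + ct 1 * ((w 0 - w 1) + (w 1 - w 2))^2 := by
    intro w
    simp only [dotProduct, Matrix.mulVec, Fin.sum_univ_three, h00, h01, h02, h10, h11, h12,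
      h20, h21, h22]
    ring
  have hkey : ∀ w : Fin 3 → ℝ, w ⬝ᵥ H.mulVec w =
      (((Real.sin (θ 1) * Real.cos (θ 2) + Real.cos (θ 1) * Real.sin (θ 2)) * (w 0 - w 1)
          + Real.cos (θ 1) * Real.sin (θ 2) * (w 1 - w 2))^2
        + (Real.sin (θ 1) * Real.sin (θ 2) * (w 1 - w 2))^2)
      / (Real.sin (θ 1) * Real.sin (θ 2) *
          (Real.sin (θ 1) * Real.cos (θ 2) + Real.cos (θ 1) * Real.sin (θ 2))) := by
    intro w
    rw [hq w, ← yamabe_key (Real.cos (θ 1)) (Real.cos (θ 2)) (Real.sin (θ 1)) (Real.sin (θ 2))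
      (w 0 - w 1) (w 1 - w 2) (hs 1) (hs 2) (by rw [← hsin0]; exact hs 0)]
    rw [hct]
    simp only
    rw [hcos0, hsin0]
  have hden : 0 < Real.sin (θ 1) * Real.sin (θ 2) *
      (Real.sin (θ 1) * Real.cos (θ 2) + Real.cos (θ 1) * Real.sin (θ 2)) := by
    have h0 := hs 0
    rw [hsin0] at h0
    exact mul_pos (mul_pos (hs 1) (hs 2)) h0
  have hnonneg : ∀ w : Fin 3 → ℝ, 0 ≤ w ⬝ᵥ H.mulVec w := by
    intro w
    rw [hkey w]
    exact div_nonneg (by positivity) hden.le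
  have hsymm : H.IsSymm := by
    ext a b
    fin_cases a <;> fin_cases b <;>
      simp [Matrix.transpose_apply, h00, h01, h02, h10, h11, h12, h20, h21, h22]
  refine ⟨hsymm, ?_, ?_, ?_⟩
  · intro a
    rw [Fin.sum_univ_three]
    fin_cases a
    · show H 0 0 + H 0 1 + H 0 2 = 0
      rw [h00, h01, h02]; ring
    · show H 1 0 + H 1 1 + H 1 2 = 0
      rw [h10, h11, h12]; ring
    · show H 2 0 + H 2 1 + H 2 2 = 0
      rw [h20, h21, h22]; ring
  · rw [Matrix.posSemidef_iff_dotProduct_mulVec]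
    constructor
    · show Hᴴ = H
      rw [Matrix.conjTranspose]
      exact Matrix.isHermitian_iff_isSymm.mpr hsymm
    · intro x
      simpa using hnonneg x
  · intro w hw hw0
    rcases lt_or_eq_of_le (hnonneg w) with h | h
    · exact h
    exfalso
    rw [hkey w] at h
    have hnum : (((Real.sin (θ 1) * Real.cos (θ 2) + Real.cos (θ 1) * Real.sin (θ 2)) * (w 0 - w 1)
          + Real.cos (θ 1) * Real.sin (θ 2) * (w 1 - w 2))^2
        + (Real.sin (θ 1) * Real.sin (θ 2) * (w 1 - w 2))^2) = 0 := by
      have h' := h.symm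
      rw [div_eq_zero_iff] at h'
      rcases h' with h' | h'
      · exact h'
      · exact absurd h' (ne_of_gt hden)
    have sqA := sq_nonneg ((Real.sin (θ 1) * Real.cos (θ 2) + Real.cos (θ 1) * Real.sin (θ 2)) * (w 0 - w 1)
          + Real.cos (θ 1) * Real.sin (θ 2) * (w 1 - w 2))
    have sqB := sq_nonneg (Real.sin (θ 1) * Real.sin (θ 2) * (w 1 - w 2))
    have h1 : Real.sin (θ 1) * Real.sin (θ 2) * (w 1 - w 2) = 0 := by
      have : (Real.sin (θ 1) * Real.sin (θ 2) * (w 1 - w 2))^2 = 0 := by linarith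
      exact pow_eq_zero_iff (by norm_num) |>.mp this
    have hy : w 1 - w 2 = 0 := by
      have := mul_pos (hs 1) (hs 2)
      rcases mul_eq_zero.mp h1 with h' | h'
      · exact absurd h' (ne_of_gt this)
      · exact h'
    have h2 : ((Real.sin (θ 1) * Real.cos (θ 2) + Real.cos (θ 1) * Real.sin (θ 2)) * (w 0 - w 1)
          + Real.cos (θ 1) * Real.sin (θ 2) * (w 1 - w 2)) = 0 := by
      have : ((Real.sin (θ 1) * Real.cos (θ 2) + Real.cos (θ 1) * Real.sin (θ 2)) * (w 0 - w 1)
          + Real.cos (θ 1) * Real.sin (θ 2) * (w 1 - w 2))^2 = 0 := by linarith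
      exact pow_eq_zero_iff (by norm_num) |>.mp this
    have hs0' : 0 < Real.sin (θ 1) * Real.cos (θ 2) + Real.cos (θ 1) * Real.sin (θ 2) := by
      rw [← hsin0]; exact hs 0
    have hx : w 0 - w 1 = 0 := by
      rw [hy, mul_zero, add_zero] at h2
      rcases mul_eq_zero.mp h2 with h' | h'
      · exact absurd h' (ne_of_gt hs0')
      · exact h'
    rw [Fin.sum_univ_three] at hw
    apply hw0
    funext a
    have e1 : w 1 = w 2 := by linarith
    have e0 : w 0 = w 1 := by linarith
    have : w 0 = 0 := by
      rw [e0, e1] at hw ⊢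
      linarith
    fin_cases a
    · show w 0 = 0; exact this
    · show w 1 = 0; rw [e0] at this; exact this
    · show w 2 = 0; rw [e0, e1] at this; exact this
end
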